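/- Consider the Game of Graph Nim on the graph H₁ (path A–B–C–D with edges AB, BC, CD, plus a disjoint edge EF). Let k ≥ 1, let r be the unique natural number with 2^r ≤ k < 2^{r+1}, let m ≥ 0, and let s satisfy 1 ≤ s ≤ k. If w(EF) = k, w(BC) = s, and {w(AB), w(CD)} = {2^{r+1}·m, 2^{r+1}·m + k − s} (with both of these weights positive), then the configuration is a losing position for the player to move. -/

import Mathlib

namespace GraphNim

variable {V E : Type} [Fintype E]

/-- A legal move in the Game of Graph Nim: choose a vertex `v` and weakly decrease
the weights of edges incident to `v` (all other edges unchanged), strictly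
decreasing the total weight. -/
def Move (inc : V → E → Prop) (w w' : E → ℕ) : Prop :=
  ∃ v : V, (∀ e, w' e ≤ w e) ∧ (∀ e, ¬ inc v e → w' e = w e) ∧
    (∑ e, w' e) < (∑ e, w e)

/-- A configuration is losing for the player to move: every legal move leads to a
non-losing configuration (the all-zero configuration is vacuously losing). -/
def Losing (inc : V → E → Prop) (w : E → ℕ) : Prop :=
  ∀ w', Move inc w w' → ¬ Losing inc w'
termination_by ∑ e, w e
decreasing_by
  rename_i h
  obtain ⟨v, _, _, h3⟩ := h
  exact h3

/-- A configuration is winning for the player to move: some legal move leads to a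
losing configuration. -/
def Winning (inc : V → E → Prop) (w : E → ℕ) : Prop :=
  ∃ w', Move inc w w' ∧ Losing inc w'

end GraphNim

open GraphNim

/-- Endpoints of the edges of the graph `H₁` (path `A–B–C–D` plus a disjoint edge
`EF`): vertices `A = 0, …, F = 5`, edges `AB = 0, BC = 1, CD = 2, EF = 3`. -/
def h1Ends : Fin 4 → Fin 6 × Fin 6
  | 0 => (0, 1)
  | 1 => (1, 2)
  | 2 => (2, 3)
  | 3 => (4, 5)

def h1Inc (v : Fin 6) (e : Fin 4) : Prop := (h1Ends e).1 = v ∨ (h1Ends e).2 = v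

/-! ### Auxiliary machinery -/

instance : ∀ v e, Decidable (h1Inc v e) := fun v e => by unfold h1Inc; infer_instance

lemma losing_iff {V E : Type} [Fintype E] (inc : V → E → Prop) (w : E → ℕ) :
    Losing inc w ↔ ∀ w', Move inc w w' → ¬ Losing inc w' := by
  rw [Losing]

/-! #### Arithmetic lemmas about `xor` -/

lemma xor_div_pow (n : ℕ) : ∀ a k : ℕ, k < 2 ^ n → (a ^^^ k) / 2 ^ n = a / 2 ^ n := by
  induction n with
  | zero => intro a k hk; interval_cases k; simp
  | succ n ih =>
    intro a k hk
    calc (a ^^^ k) / 2 ^ (n+1) = (a ^^^ k) / 2 / 2 ^ n := by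
          rw [Nat.div_div_eq_div_mul, ← pow_succ']
      _ = (a / 2 ^^^ k / 2) / 2 ^ n := by rw [Nat.xor_div_two]
      _ = a / 2 / 2 ^ n := ih _ _ (by omega)
      _ = a / 2 ^ (n+1) := by rw [Nat.div_div_eq_div_mul, ← pow_succ']

lemma xor_lt_mul {n m a k : ℕ} (ha : a < 2 ^ n * m) (hk : k < 2 ^ n) :
    a ^^^ k < 2 ^ n * m := by
  have hpos : 0 < 2 ^ n := Nat.pow_pos (by norm_num)
  have hc : 2 ^ n * m = m * 2 ^ n := mul_comm _ _
  have h := xor_div_pow n a k hk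
  have h1 : a / 2 ^ n < m := (Nat.div_lt_iff_lt_mul hpos).mpr (by omega)
  have h2 : (a ^^^ k) / 2 ^ n < m := by omega
  have := (Nat.div_lt_iff_lt_mul hpos).mp h2
  omega

lemma mul_xor_lt (n m d : ℕ) (hd : d < 2 ^ n) : (2 ^ n * m) ^^^ d = 2 ^ n * m + d := by
  induction n generalizing d m with
  | zero => interval_cases d; simp
  | succ n ih =>
    have hx : ((2 ^ (n+1) * m) ^^^ d) / 2 = 2 ^ n * m + d / 2 := by
      rw [Nat.xor_div_two]
      have : 2 ^ (n+1) * m / 2 = 2 ^ n * m := by ring_nf; omega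
      rw [this]
      exact ih m (d/2) (by omega)
    have hm : ((2 ^ (n+1) * m) ^^^ d) % 2 = (2 ^ (n+1) * m + d) % 2 := Nat.xor_mod_two_eq
    have := Nat.div_add_mod ((2 ^ (n+1) * m) ^^^ d) 2
    have h2 : 2 ^ (n+1) * m % 2 = 0 := by
      have : 2 ^ (n+1) * m = 2 * (2 ^ n * m) := by ring
      omega
    have hd2 := Nat.div_add_mod d 2
    have : 2 ^ (n+1) * m = 2 * (2 ^ n * m) := by ring
    omega

/-! #### Move constructors and destructor on `H₁` -/

lemma move_B (w : Fin 4 → ℕ) (a' b' : ℕ) (h0 : a' ≤ w 0) (h1 : b' ≤ w 1)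
    (hlt : a' + b' < w 0 + w 1) : Move h1Inc w ![a', b', w 2, w 3] := by
  refine ⟨1, fun e => ?_, fun e he => ?_, ?_⟩
  · fin_cases e <;> simp_all
  · fin_cases e <;> simp_all <;> exact absurd (by decide) he
  · simp [Fin.sum_univ_four]; omega

lemma move_C (w : Fin 4 → ℕ) (b' c' : ℕ) (h1 : b' ≤ w 1) (h2 : c' ≤ w 2)
    (hlt : b' + c' < w 1 + w 2) : Move h1Inc w ![w 0, b', c', w 3] := by
  refine ⟨2, fun e => ?_, fun e he => ?_, ?_⟩
  · fin_cases e <;> simp_all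
  · fin_cases e <;> simp_all <;> exact absurd (by decide) he
  · simp [Fin.sum_univ_four]; omega

lemma move_D (w : Fin 4 → ℕ) (c' : ℕ) (h2 : c' < w 2) : Move h1Inc w ![w 0, w 1, c', w 3] := by
  refine ⟨3, fun e => ?_, fun e he => ?_, ?_⟩
  · fin_cases e <;> simp_all; omega
  · fin_cases e <;> simp_all <;> exact absurd (by decide) he
  · simp [Fin.sum_univ_four]; omega

lemma move_E (w : Fin 4 → ℕ) (k' : ℕ) (h3 : k' < w 3) : Move h1Inc w ![w 0, w 1, w 2, k'] := by
  refine ⟨4, fun e => ?_, fun e he => ?_, ?_⟩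
  · fin_cases e <;> simp_all; omega
  · fin_cases e <;> simp_all <;> exact absurd (by decide) he
  · simp [Fin.sum_univ_four]; omega

lemma move_frame {w w' : Fin 4 → ℕ} (h : Move h1Inc w w') :
    (∀ e, w' e ≤ w e) ∧ (w' 0 + w' 1 + w' 2 + w' 3 < w 0 + w 1 + w 2 + w 3) ∧
    ((w' 2 = w 2 ∧ w' 3 = w 3) ∨ (w' 0 = w 0 ∧ w' 3 = w 3) ∨
      (w' 0 = w 0 ∧ w' 1 = w 1 ∧ w' 2 = w 2)) := by
  obtain ⟨v, h1, h2, h3⟩ := h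
  rw [Fin.sum_univ_four, Fin.sum_univ_four] at h3
  refine ⟨h1, h3, ?_⟩
  fin_cases v
  · exact Or.inl ⟨h2 2 (by decide), h2 3 (by decide)⟩
  · exact Or.inl ⟨h2 2 (by decide), h2 3 (by decide)⟩
  · exact Or.inr (Or.inl ⟨h2 0 (by decide), h2 3 (by decide)⟩)
  · exact Or.inr (Or.inl ⟨h2 0 (by decide), h2 3 (by decide)⟩)
  · exact Or.inr (Or.inr ⟨h2 0 (by decide), h2 1 (by decide), h2 2 (by decide)⟩)
  · exact Or.inr (Or.inr ⟨h2 0 (by decide), h2 1 (by decide), h2 2 (by decide)⟩)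

/-! #### The invariant set -/

/-- The invariant set of losing positions (asymmetric version: the smaller of
`w 0`, `w 2` is `w 0` in the third clause). -/
def Q (w : Fin 4 → ℕ) : Prop :=
  (w 1 = 0 ∧ w 0 ^^^ w 2 = w 3) ∨
  (w 0 = 0 ∧ w 1 + w 2 = w 3) ∨
  (∃ r m, 1 ≤ m ∧ 1 ≤ w 1 ∧ w 1 ≤ w 3 ∧ 2 ^ r ≤ w 3 ∧ w 3 < 2 ^ (r + 1) ∧
    w 0 = 2 ^ (r + 1) * m ∧ w 2 = 2 ^ (r + 1) * m + (w 3 - w 1))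

lemma Q_B0 (a b c k : ℕ) (hb : b = 0) (hx : a ^^^ c = k) : Q ![a, b, c, k] := by
  left; exact ⟨by simpa using hb, by simpa using hx⟩

lemma Q_A0 (a b c k : ℕ) (ha : a = 0) (hs : b + c = k) : Q ![a, b, c, k] := by
  right; left; exact ⟨by simpa using ha, by simpa using hs⟩

lemma Q_std {r m : ℕ} (a b c k d : ℕ) (hm : 1 ≤ m) (ha : a = 2 ^ (r + 1) * m)
    (hc : c = 2 ^ (r + 1) * m + d) (hk : k = b + d) (hbd : k < 2 ^ (r + 1)) :
    Q ![a, b, c, k] := by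
  rcases Nat.eq_zero_or_pos b with hb | hb
  · refine Q_B0 a b c k hb ?_
    subst ha hc hk hb
    rw [← mul_xor_lt (r + 1) m d (by omega), xor_cancel_left]
    omega
  · right; right
    have hk1 : 1 ≤ k := by omega
    set L := Nat.log 2 k with hL
    have h2 : 2 ^ L ≤ k := Nat.pow_log_le_self 2 (by omega)
    have h3 : k < 2 ^ (L + 1) := Nat.lt_pow_succ_log_self (by norm_num) k
    have hle : L ≤ r := by
      have : 2 ^ L < 2 ^ (r + 1) := by omega
      have := (Nat.pow_lt_pow_iff_right (a := 2) (by norm_num)).mp this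
      omega
    have key : 2 ^ (r + 1) * m = 2 ^ (L + 1) * (2 ^ (r - L) * m) := by
      rw [← mul_assoc, ← pow_add]
      congr 2
      omega
    have hmpos : 0 < 2 ^ (r - L) * m := by positivity
    refine ⟨L, 2 ^ (r - L) * m, by omega, by simp; omega, by simp; omega,
      by simpa using h2, by simpa using h3, by simp [ha, key], ?_⟩
    simp only [Matrix.cons_val_two, Matrix.tail_cons, Matrix.head_cons,
      Matrix.cons_val_three, Matrix.cons_val_one, Matrix.cons_val_zero]
    omega

/-! #### The mirror symmetry of `H₁` -/

/-- Mirror symmetry of the graph `H₁`: swap `A ↔ D`, `B ↔ C` (and so `AB ↔ CD`). -/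
def mirr (w : Fin 4 → ℕ) : Fin 4 → ℕ := ![w 2, w 1, w 0, w 3]

lemma mirr_flip_flip (w : Fin 4 → ℕ) : mirr (mirr w) = w := by
  funext e; fin_cases e <;> simp [mirr]

lemma move_flip {w w' : Fin 4 → ℕ} (h : Move h1Inc w w') :
    Move h1Inc (mirr w) (mirr w') := by
  obtain ⟨v, h1, h2, h3⟩ := h
  refine ⟨![3, 2, 1, 0, 4, 5] v, fun e => ?_, fun e he => ?_, ?_⟩
  · fin_cases e <;> simp [mirr] <;> apply h1
  · have key : ∀ (v : Fin 6) (e : Fin 4),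
        h1Inc v (![2, 1, 0, 3] e) → h1Inc (![3, 2, 1, 0, 4, 5] v) e := by decide
    fin_cases e <;> simp [mirr] <;>
      [ exact h2 2 fun hc => he (key v 0 (by simpa using hc));
        exact h2 1 fun hc => he (key v 1 (by simpa using hc));
        exact h2 0 fun hc => he (key v 2 (by simpa using hc));
        exact h2 3 fun hc => he (key v 3 (by simpa using hc))]
  · rw [Fin.sum_univ_four, Fin.sum_univ_four] at h3 ⊢
    simp only [mirr]
    simp
    omega

lemma losing_flip : ∀ n (w : Fin 4 → ℕ), w 0 + w 1 + w 2 + w 3 ≤ n →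
    Losing h1Inc w → Losing h1Inc (mirr w) := by
  intro n
  induction n using Nat.strong_induction_on with
  | _ n ih =>
    intro w hsum hL
    rw [losing_iff]
    intro w' hmv hL'
    have hm2 : Move h1Inc w (mirr w') := by
      have := move_flip hmv
      rwa [mirr_flip_flip] at this
    obtain ⟨_, hlt, _⟩ := move_frame hm2
    have hless : mirr w' 0 + mirr w' 1 + mirr w' 2 + mirr w' 3 < n := by omega
    have hLf : Losing h1Inc (mirr w') := by
      have := ih (w' 0 + w' 1 + w' 2 + w' 3)
        (by simp [mirr, Fin.sum_univ_four] at hless ⊢; omega) w' le_rfl hL'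
      exact this
    rw [losing_iff] at hL
    exact hL (mirr w') hm2 hLf

/-! #### The main induction -/

lemma q_losing : ∀ n (w : Fin 4 → ℕ), w 0 + w 1 + w 2 + w 3 ≤ n → Q w → Losing h1Inc w := by
  intro n
  induction n using Nat.strong_induction_on with
  | _ n ih =>
    intro w hsum hQ
    rw [losing_iff]
    intro w' hmv hL'
    obtain ⟨hle, hlt, hframe⟩ := move_frame hmv
    have key : ∀ w'' : Fin 4 → ℕ, Move h1Inc w' w'' → Q w'' → False := by
      intro w'' hmv2 hQ2
      obtain ⟨_, hlt2, _⟩ := move_frame hmv2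
      have hLw'' : Losing h1Inc w'' :=
        ih (w'' 0 + w'' 1 + w'' 2 + w'' 3) (by omega) w'' le_rfl hQ2
      rw [losing_iff] at hL'
      exact hL' w'' hmv2 hLw''
    have hle0 := hle 0; have hle1 := hle 1; have hle2 := hle 2; have hle3 := hle 3
    rcases hQ with ⟨hb, hxor⟩ | ⟨ha, hadd⟩ | ⟨r, m, hm, hb1, hbk, hr1, hr2, h0, h2⟩
    · -- B0 : three-pile Nim
      rcases hframe with ⟨f2, f3⟩ | ⟨f0, f3⟩ | ⟨f0, f1, f2⟩
      · have hw0 : w 0 = w 3 ^^^ w 2 := by rw [← hxor, xor_cancel_right]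
        rcases Nat.lt_xor_cases (show w' 0 < w 3 ^^^ w 2 by omega) with h | h
        · exact key _ (move_E w' (w' 0 ^^^ w' 2) (by rw [f2, f3]; exact h))
            (Q_B0 _ _ _ _ (by omega) rfl)
        · exact key _ (move_D w' (w' 0 ^^^ w' 3) (by rw [f2, f3]; exact h))
            (Q_B0 _ _ _ _ (by omega) (xor_cancel_left _ _))
      · have hw2 : w 2 = w 0 ^^^ w 3 := by rw [← hxor, xor_cancel_left]
        rcases Nat.lt_xor_cases (show w' 2 < w 0 ^^^ w 3 by omega) with h | h
        · have h' : w' 2 ^^^ w' 3 < w' 0 := by rw [f0, f3]; exact h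
          exact key _ (move_B w' (w' 2 ^^^ w' 3) 0 (by omega) (Nat.zero_le _) (by omega))
            (Q_B0 _ _ _ _ rfl (by rw [Nat.xor_comm (w' 2) (w' 3), xor_cancel_right]))
        · exact key _ (move_E w' (w' 0 ^^^ w' 2) (by rw [f0, f3, Nat.xor_comm]; exact h))
            (Q_B0 _ _ _ _ (by omega) rfl)
      · rcases Nat.lt_xor_cases (show w' 3 < w 0 ^^^ w 2 by omega) with h | h
        · have h' : w' 3 ^^^ w' 2 < w' 0 := by rw [f2, f0]; exact h
          exact key _ (move_B w' (w' 3 ^^^ w' 2) 0 (by omega) (Nat.zero_le _) (by omega))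
            (Q_B0 _ _ _ _ rfl (xor_cancel_right _ _))
        · have h' : w' 0 ^^^ w' 3 < w' 2 := by rw [f0, f2, Nat.xor_comm]; exact h
          exact key _ (move_D w' (w' 0 ^^^ w' 3) h')
            (Q_B0 _ _ _ _ (by omega) (xor_cancel_left _ _))
    · -- A0
      rcases hframe with ⟨f2, f3⟩ | ⟨f0, f3⟩ | ⟨f0, f1, f2⟩
      · exact key _ (move_E w' (w' 1 + w' 2) (by omega)) (Q_A0 _ _ _ _ (by omega) rfl)
      · exact key _ (move_E w' (w' 1 + w' 2) (by omega)) (Q_A0 _ _ _ _ (by omega) rfl)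
      · rcases le_or_gt (w 2) (w' 3) with h | h
        · exact key _ (move_C w' (w' 3 - w' 2) (w' 2) (by omega) le_rfl (by omega))
            (Q_A0 _ _ _ _ (by omega) (by omega))
        · exact key _ (move_C w' 0 (w' 3) (Nat.zero_le _) (by omega) (by omega))
            (Q_A0 _ _ _ _ (by omega) (by omega))
    · -- F
      have hd : w 3 = w 1 + (w 3 - w 1) := by omega
      rcases hframe with ⟨f2, f3⟩ | ⟨f0, f3⟩ | ⟨f0, f1, f2⟩
      · rcases eq_or_lt_of_le hle0 with h | h
        · exact key _ (move_E w' (w' 1 + (w 3 - w 1)) (by omega))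
            (Q_std (r := r) _ _ _ _ (w 3 - w 1) hm (by omega) (by omega) rfl (by omega))
        · have hxlt : w' 0 ^^^ w' 3 < 2 ^ (r + 1) * m := xor_lt_mul (by omega) (by omega)
          exact key _ (move_C w' 0 (w' 0 ^^^ w' 3) (Nat.zero_le _) (by omega) (by omega))
            (Q_B0 _ _ _ _ rfl (xor_cancel_left _ _))
      · rcases le_or_gt (w 0) (w' 2) with h | h
        · exact key _ (move_E w' (w' 1 + (w' 2 - w 0)) (by omega))
            (Q_std (r := r) _ _ _ _ (w' 2 - w 0) hm (by omega) (by omega) rfl (by omega))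
        · have hxlt : w' 2 ^^^ w' 3 < 2 ^ (r + 1) * m := xor_lt_mul (by omega) (by omega)
          exact key _ (move_B w' (w' 2 ^^^ w' 3) 0 (by omega) (Nat.zero_le _) (by omega))
            (Q_B0 _ _ _ _ rfl (by rw [Nat.xor_comm (w' 2) (w' 3), xor_cancel_right]))
      · rcases le_or_gt (w 1) (w' 3) with h | h
        · exact key _ (move_D w' (2 ^ (r + 1) * m + (w' 3 - w 1)) (by omega))
            (Q_std (r := r) _ _ _ _ (w' 3 - w 1) hm (by omega) rfl (by omega) (by omega))
        · exact key _ (move_C w' (w' 3) (2 ^ (r + 1) * m) (by omega) (by omega) (by omega))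
            (Q_std (r := r) _ _ _ _ 0 hm (by omega) (by omega) (by omega) (by omega))

/-- On `H₁`: if `w(EF) = k ≥ 1` with `2^r ≤ k < 2^(r+1)`, `w(BC) = s` with
`1 ≤ s ≤ k`, and `{w(AB), w(CD)} = {2^(r+1)·m, 2^(r+1)·m + k − s}` (both
positive), then the configuration is losing for the player to move. -/
theorem h1_losing_r0 (w : Fin 4 → ℕ) (k r m s : ℕ)
    (hk : 1 ≤ k) (hr1 : 2 ^ r ≤ k) (hr2 : k < 2 ^ (r + 1))
    (hs1 : 1 ≤ s) (hs2 : s ≤ k)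
    (hEF : w 3 = k) (hBC : w 1 = s)
    (hset : (w 0 = 2 ^ (r + 1) * m ∧ w 2 = 2 ^ (r + 1) * m + k - s) ∨
            (w 0 = 2 ^ (r + 1) * m + k - s ∧ w 2 = 2 ^ (r + 1) * m))
    (hAB : 0 < w 0) (hCD : 0 < w 2) :
    Losing h1Inc w := by
  rcases hset with ⟨h0, h2⟩ | ⟨h0, h2⟩
  · have hm : 1 ≤ m := by
      rcases Nat.eq_zero_or_pos m with rfl | h
      · rw [mul_zero] at h0; omega
      · exact h
    apply q_losing (w 0 + w 1 + w 2 + w 3) w le_rfl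
    exact Or.inr (Or.inr ⟨r, m, hm, by omega, by omega, by omega, by omega, h0, by omega⟩)
  · have hm : 1 ≤ m := by
      rcases Nat.eq_zero_or_pos m with rfl | h
      · rw [mul_zero] at h2; omega
      · exact h
    have hQ : Q (mirr w) := by
      have hv : mirr w = ![w 2, w 1, w 0, w 3] := rfl
      rw [hv]
      exact Q_std (r := r) _ _ _ _ (k - s) hm (by omega) (by omega) (by omega) (by omega)
    have hL : Losing h1Inc (mirr w) :=
      q_losing (mirr w 0 + mirr w 1 + mirr w 2 + mirr w 3) (mirr w) le_rfl hQ
    have hL2 := losing_flip (mirr w 0 + mirr w 1 + mirr w 2 + mirr w 3) (mirr w) le_rfl hL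
    rwa [mirr_flip_flip] at hL2
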